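/- Let H be a Hopf algebra over a commutative ring k with invertible antipode S, and let t ∈ H be a left integral. Suppose f, g : H → k are k-linear maps such that Σ t₍₁₎ f(t₍₂₎) = 1 and Σ g(t₍₁₎) t₍₂₎ = 1. Then g = f ∘ S⁻¹. -/

import Mathlib

open TensorProduct Coalgebra HopfAlgebra

set_option synthInstance.maxHeartbeats 800000 in
theorem left_integral_functionals_antipode {k H : Type*} [CommRing k] [Ring H]
    [HopfAlgebra k H] (Sinv : H →ₗ[k] H)
    (hS1 : Sinv ∘ₗ antipode (R := k) = LinearMap.id)
    (hS2 : antipode (R := k) ∘ₗ Sinv = LinearMap.id)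
    (t : H) (ht : ∀ h : H, h * t = counit (R := k) h • t)
    (f g : H →ₗ[k] k)
    (hf : TensorProduct.rid k H (TensorProduct.map LinearMap.id f (comul (R := k) t)) = 1)
    (hg : TensorProduct.lid k H (TensorProduct.map g LinearMap.id (comul (R := k) t)) = 1) :
    g = f ∘ₗ Sinv := by
  set S : H →ₗ[k] H := antipode (R := k) with hSdef
  set τ : H ⊗[k] H := comul (R := k) t with hτ
  set Θ : (H ⊗[k] H) ⊗[k] H →ₗ[k] H ⊗[k] H :=
    (LinearMap.mul' k H ∘ₗ S.rTensor H).rTensor H with hΘ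
  have e1 : ∀ (a : H) (x : H ⊗[k] H),
      Θ ((TensorProduct.assoc k H H H).symm (a ⊗ₜ x)) = (S a ⊗ₜ (1:H)) * x := by
    intro a x
    induction x using TensorProduct.induction_on with
    | zero => rw [tmul_zero, map_zero, map_zero, mul_zero]
    | tmul b c =>
        rw [TensorProduct.assoc_symm_tmul]
        simp [hΘ, Algebra.TensorProduct.tmul_mul_tmul]
    | add x y hx hy =>
        simp only [tmul_add, map_add, mul_add, hx, hy]
  -- Σ S(h₁) h₂ ⊗ h₃ = 1 ⊗ h
  have claim2 : ∀ (h : H) (r : Coalgebra.Repr k h (H × H)),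
      ∑ j ∈ r.index, (S (r.left j) ⊗ₜ (1:H)) * comul (R := k) (r.right j)
        = (1:H) ⊗ₜ[k] h := by
    intro h r
    have step1 : Θ ((TensorProduct.assoc k H H H).symm
        ((comul (R := k)).lTensor H (comul (R := k) h)))
        = ∑ j ∈ r.index, (S (r.left j) ⊗ₜ (1:H)) * comul (R := k) (r.right j) := by
      conv_lhs => rw [← r.eq]
      rw [map_sum, map_sum, map_sum]
      exact Finset.sum_congr rfl fun j _ => by rw [LinearMap.lTensor_tmul, e1]
    rw [← step1, coassoc_symm_apply]
    have hcomp : Θ ∘ₗ (comul (R := k)).rTensor H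
        = ((Algebra.linearMap k H).rTensor H) ∘ₗ ((counit (R := k)).rTensor H) := by
      rw [hΘ, ← LinearMap.rTensor_comp, ← LinearMap.rTensor_comp, LinearMap.comp_assoc,
        hSdef, mul_antipode_rTensor_comul]
    have := LinearMap.congr_fun hcomp (comul (R := k) h)
    simp only [LinearMap.comp_apply] at this
    rw [this, rTensor_counit_comul, LinearMap.rTensor_tmul]
    simp
  have hcounit_r : ∀ (h : H) (r : Coalgebra.Repr k h (H × H)),
      ∑ j ∈ r.index, counit (R := k) (r.right j) • r.left j = h := by
    intro h r
    have h2 := congrArg (TensorProduct.rid k H) (sum_tmul_counit_eq (R := k) r)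
    rw [map_sum] at h2
    simp only [rid_tmul, one_smul] at h2
    exact h2
  -- the key identity (★)
  have star : ∀ h : H, (S h ⊗ₜ (1:H)) * τ = ((1:H) ⊗ₜ h) * τ := by
    intro h
    let r := Coalgebra.Repr.arbitrary k h
    have way1 : ∑ j ∈ r.index, (S (r.left j) ⊗ₜ (1:H)) * comul (R := k) (r.right j * t)
        = (S h ⊗ₜ (1:H)) * τ := by
      have term : ∀ j, (S (r.left j) ⊗ₜ (1:H)) * comul (R := k) (r.right j * t)
          = ((counit (R := k) (r.right j) • S (r.left j)) ⊗ₜ (1:H)) * τ := by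
        intro j
        rw [ht, map_smul, mul_smul_comm, ← smul_mul_assoc, TensorProduct.smul_tmul']
      rw [Finset.sum_congr rfl fun j _ => term j, ← Finset.sum_mul, ← TensorProduct.sum_tmul]
      congr 2
      calc ∑ j ∈ r.index, counit (R := k) (r.right j) • S (r.left j)
          = S (∑ j ∈ r.index, counit (R := k) (r.right j) • r.left j) := by
            rw [map_sum]; exact Finset.sum_congr rfl fun j _ => (map_smul S _ _).symm
        _ = S h := by rw [hcounit_r h r]
    have way2 : ∑ j ∈ r.index, (S (r.left j) ⊗ₜ (1:H)) * comul (R := k) (r.right j * t)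
        = ((1:H) ⊗ₜ h) * τ := by
      have term : ∀ j, (S (r.left j) ⊗ₜ (1:H)) * comul (R := k) (r.right j * t)
          = ((S (r.left j) ⊗ₜ (1:H)) * comul (R := k) (r.right j)) * τ := by
        intro j
        rw [Bialgebra.comul_mul, mul_assoc]
      rw [Finset.sum_congr rfl fun j _ => term j, ← Finset.sum_mul, claim2 h r]
    rw [← way1, way2]
  -- apply g ⊗ f to (★)
  set χ : H ⊗[k] H →ₗ[k] k := LinearMap.mul' k k ∘ₗ TensorProduct.map g f with hχ
  have eA : ∀ (a : H) (x : H ⊗[k] H), χ ((a ⊗ₜ (1:H)) * x)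
      = g (a * TensorProduct.rid k H (TensorProduct.map LinearMap.id f x)) := by
    intro a x
    induction x using TensorProduct.induction_on with
    | zero => simp
    | tmul b c =>
        simp only [hχ, Algebra.TensorProduct.tmul_mul_tmul, LinearMap.comp_apply,
          TensorProduct.map_tmul, LinearMap.mul'_apply, LinearMap.id_apply, rid_tmul,
          one_mul, mul_smul_comm, map_smul]
        rw [smul_eq_mul, mul_comm]
    | add x y hx hy =>
        simp only [mul_add, map_add, hx, hy, mul_add]
  have eB : ∀ (a : H) (x : H ⊗[k] H), χ (((1:H) ⊗ₜ a) * x)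
      = f (a * TensorProduct.lid k H (TensorProduct.map g LinearMap.id x)) := by
    intro a x
    induction x using TensorProduct.induction_on with
    | zero => simp
    | tmul b c =>
        simp only [hχ, Algebra.TensorProduct.tmul_mul_tmul, LinearMap.comp_apply,
          TensorProduct.map_tmul, LinearMap.mul'_apply, LinearMap.id_apply, lid_tmul,
          one_mul, mul_smul_comm, map_smul]
        rw [smul_eq_mul]
    | add x y hx hy =>
        simp only [mul_add, map_add, hx, hy, mul_add]
  have key : ∀ h : H, g (S h) = f h := by
    intro h
    have := congrArg χ (star h)
    rw [eA, eB, hf, hg, mul_one, mul_one] at this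
    exact this
  ext x
  have hx : S (Sinv x) = x := LinearMap.congr_fun hS2 x
  have := key (Sinv x)
  rw [hx] at this
  simpa using this
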